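/- Let f(x) = a x^2 + b x + c with integer coefficients and D = b^2 - 4ac, and let k be a positive integer with B_k = lcm_{1 ≤ i ≤ k} { i·(a^2 i^2 - D) } nonzero. Then for any positive integer n and any integers 0 ≤ i < j ≤ k, gcd(f(n+i), f(n+j)) divides B_k. -/

import Mathlib

/-- For `f(x) = ax² + bx + c`, `D = b² - 4ac` and
`B_k = lcm_{1 ≤ i ≤ k} { i(a²i² - D) }` nonzero, for any positive `n` and
`0 ≤ i < j ≤ k`, `gcd(f(n+i), f(n+j))` divides `B_k`. -/
theorem gcd_dvd_Bk (a b c : ℤ) (k : ℕ) (hk : 1 ≤ k)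
    (hB : (Finset.Icc 1 k).lcm
        (fun i : ℕ => (i : ℤ) * (a^2 * (i : ℤ)^2 - (b^2 - 4*a*c))) ≠ 0)
    (n : ℤ) (hn : 1 ≤ n) (i j : ℕ) (hij : i < j) (hj : j ≤ k) :
    (Int.gcd (a*(n+i)^2 + b*(n+i) + c) (a*(n+j)^2 + b*(n+j) + c) : ℤ) ∣
      (Finset.Icc 1 k).lcm
        (fun i : ℕ => (i : ℤ) * (a^2 * (i : ℤ)^2 - (b^2 - 4*a*c))) := by
  set d : ℕ := j - i with hd
  have hdmem : d ∈ Finset.Icc 1 k := by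
    simp only [Finset.mem_Icc]
    omega
  have hji : (j : ℤ) = (i : ℤ) + (d : ℤ) := by
    have : i + d = j := by omega
    push_cast [← this]; ring
  set fa := a*(n+i)^2 + b*(n+i) + c with hfa
  set fb := a*(n+j)^2 + b*(n+j) + c with hfb
  have h1 : (Int.gcd fa fb : ℤ) ∣ fa := Int.gcd_dvd_left fa fb
  have h2 : (Int.gcd fa fb : ℤ) ∣ fb := Int.gcd_dvd_right fa fb
  have key : (Int.gcd fa fb : ℤ) ∣ (d : ℤ) * (a^2 * (d : ℤ)^2 - (b^2 - 4*a*c)) := by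
    have hcomb : (d : ℤ) * (a^2 * (d : ℤ)^2 - (b^2 - 4*a*c)) =
        (4*a*(d:ℤ)) * fa + (2*a*(d:ℤ) - (2*a*(n+(i:ℤ)) + a*(d:ℤ) + b)) * (fb - fa) := by
      rw [hfa, hfb, hji]; ring
    rw [hcomb]
    exact dvd_add (Dvd.dvd.mul_left h1 _) (Dvd.dvd.mul_left (dvd_sub h2 h1) _)
  exact key.trans (Finset.dvd_lcm hdmem)
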